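/- arXiv:0806.3260 — 2 statements merged into one kernel-verified Lean document; each statement's English description precedes it below -/
import Mathlib

section
/- Let A be an n×n complex invertible matrix, let r₀ ∈ ℂⁿ, let 1 ≤ m ≤ n−1, and let r be a GMRES(m) residual of A from r₀. If r ≠ 0, then the m+1 vectors r₀, A r₀, A² r₀, …, Aᵐ r₀ are linearly independent (i.e., the Krylov matrix K(A, r₀) has rank m+1). -/
open Polynomial Matrix

/-- The Euclidean (ℓ²) norm of a vector in ℂⁿ. -/
noncomputable def vecEnorm {n : ℕ} (v : Fin n → ℂ) : ℝ :=
  ‖(WithLp.equiv 2 (Fin n → ℂ)).symm v‖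

/-- `s` is a GMRES(m) residual of `A` from `r`: there is a polynomial `p` of degree at most `m`
with `p 0 = 1` such that `s = p(A) r` and `‖s‖ ≤ ‖q(A) r‖` for all admissible `q`. -/
def IsGMRESResidual {n : ℕ} (m : ℕ) (A : Matrix (Fin n) (Fin n) ℂ)
    (r s : Fin n → ℂ) : Prop :=
  ∃ p : ℂ[X], p.natDegree ≤ m ∧ p.eval 0 = 1 ∧ s = (aeval A p).mulVec r ∧
    ∀ q : ℂ[X], q.natDegree ≤ m → q.eval 0 = 1 →
      vecEnorm s ≤ vecEnorm ((aeval A q).mulVec r)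

/-- The Krylov matrix `K(A, r) = [r, Ar, …, Aᵐ r]`, an `n × (m+1)` matrix. -/
noncomputable def krylov {n : ℕ} (m : ℕ) (A : Matrix (Fin n) (Fin n) ℂ) (r : Fin n → ℂ) :
    Matrix (Fin n) (Fin (m + 1)) ℂ :=
  Matrix.of fun i j => (A ^ (j : ℕ)).mulVec r i

/-- If the GMRES(m) residual of an invertible `A` from `r₀` is nonzero, then
`r₀, A r₀, …, Aᵐ r₀` are linearly independent (the Krylov matrix has full column rank). -/
theorem krylov_full_rank_of_residual_ne_zero {n : ℕ} (m : ℕ) (hm : 1 ≤ m) (hmn : m ≤ n - 1)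
    (A : Matrix (Fin n) (Fin n) ℂ) (hA : IsUnit A) (r₀ r : Fin n → ℂ)
    (hres : IsGMRESResidual m A r₀ r) (hr : r ≠ 0) :
    LinearIndependent ℂ (fun j : Fin (m + 1) => (A ^ (j : ℕ)).mulVec r₀) := by
  by_contra hLI
  obtain ⟨c, hsum, i, hci⟩ := Fintype.not_linearIndependent_iff.mp hLI
  -- build the polynomial
  set p : ℂ[X] := ∑ j : Fin (m + 1), C (c j) * X ^ (j : ℕ) with hp
  have hpdeg : p.natDegree ≤ m := by
    refine Polynomial.natDegree_sum_le_of_forall_le _ _ fun j _ => ?_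
    calc (C (c j) * X ^ (j : ℕ)).natDegree ≤ (X ^ (j : ℕ) : ℂ[X]).natDegree :=
          Polynomial.natDegree_C_mul_le _ _
      _ = (j : ℕ) := Polynomial.natDegree_X_pow _
      _ ≤ m := Nat.lt_succ_iff.mp j.isLt
  have hcoeff : ∀ j : Fin (m + 1), p.coeff (j : ℕ) = c j := by
    intro j
    rw [hp, Polynomial.finset_sum_coeff]
    rw [Finset.sum_eq_single j]
    · simp
    · intro k _ hkj
      have hne : (j : ℕ) ≠ (k : ℕ) := fun h => hkj (Fin.val_injective h).symm
      simp [Polynomial.coeff_C_mul, Polynomial.coeff_X_pow, hne, hne.symm]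
    · simp
  have hp0 : p ≠ 0 := fun h => hci (by rw [← hcoeff i, h, Polynomial.coeff_zero])
  have haev : (aeval A p).mulVec r₀ = 0 := by
    have sum_mv : ∀ (f : Fin (m + 1) → Matrix (Fin n) (Fin n) ℂ),
        (∑ j, f j) *ᵥ r₀ = ∑ j, f j *ᵥ r₀ := by
      intro f; ext i
      simp only [Matrix.mulVec, dotProduct, Finset.sum_apply, Matrix.sum_apply,
        Finset.sum_mul]
      rw [Finset.sum_comm]
    rw [hp, map_sum, sum_mv, ← hsum]
    refine Finset.sum_congr rfl fun j _ => ?_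
    rw [_root_.map_mul, Polynomial.aeval_C, map_pow, Polynomial.aeval_X,
      ← Algebra.smul_def, Matrix.smul_mulVec]
  -- strip the power of X
  obtain ⟨q, hq, hqnd⟩ := p.exists_eq_pow_rootMultiplicity_mul_and_not_dvd hp0 0
  rw [map_zero, sub_zero] at hq hqnd
  have hq0 : q.eval 0 ≠ 0 := fun h => hqnd (Polynomial.X_dvd_iff.mpr
    (by rwa [Polynomial.coeff_zero_eq_eval_zero]))
  have hqne : q ≠ 0 := fun h => hq0 (by simp [h])
  have hqdeg : q.natDegree ≤ m := by
    have := Polynomial.natDegree_mul (mul_ne_zero_iff.mp (hq ▸ hp0)).1 hqne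
    rw [← hq] at this
    omega
  have hqaev : (aeval A q).mulVec r₀ = 0 := by
    have h1 : (A ^ p.rootMultiplicity 0).mulVec ((aeval A q).mulVec r₀) = 0 := by
      rw [Matrix.mulVec_mulVec]
      have : (A ^ p.rootMultiplicity 0) * (aeval A q) = aeval A p := by
        conv_rhs => rw [hq]
        rw [_root_.map_mul, map_pow, Polynomial.aeval_X]
      rw [this, haev]
    have hU : IsUnit (A ^ p.rootMultiplicity 0) := hA.pow _
    have hdet : IsUnit (A ^ p.rootMultiplicity 0).det :=
      (Matrix.isUnit_iff_isUnit_det _).mp hU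
    calc (aeval A q).mulVec r₀
        = ((A ^ p.rootMultiplicity 0)⁻¹ * (A ^ p.rootMultiplicity 0)).mulVec
            ((aeval A q).mulVec r₀) := by rw [Matrix.nonsing_inv_mul _ hdet, Matrix.one_mulVec]
      _ = (A ^ p.rootMultiplicity 0)⁻¹.mulVec
            ((A ^ p.rootMultiplicity 0).mulVec ((aeval A q).mulVec r₀)) := by
            rw [← Matrix.mulVec_mulVec]
      _ = 0 := by rw [h1, Matrix.mulVec_zero]
  -- normalize
  set q' : ℂ[X] := C (q.eval 0)⁻¹ * q with hq'
  have hq'deg : q'.natDegree ≤ m := le_trans (Polynomial.natDegree_C_mul_le _ _) hqdeg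
  have hq'0 : q'.eval 0 = 1 := by simp [hq', inv_mul_cancel₀ hq0]
  have hq'aev : (aeval A q').mulVec r₀ = 0 := by
    rw [hq', _root_.map_mul, Polynomial.aeval_C, ← Matrix.mulVec_mulVec, hqaev,
      Matrix.mulVec_zero]
  obtain ⟨pp, -, -, -, hmin⟩ := hres
  have := hmin q' hq'deg hq'0
  rw [hq'aev] at this
  apply hr
  have hnorm : vecEnorm r ≤ 0 := le_trans this (by simp [vecEnorm])
  have : vecEnorm r = 0 := le_antisymm hnorm (norm_nonneg _)
  have h0 : (WithLp.equiv 2 (Fin n → ℂ)).symm r = 0 := norm_eq_zero.mp this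
  simpa using congrArg (WithLp.equiv 2 (Fin n → ℂ)) h0
end

section
/- Let A be an n×n complex invertible matrix that is diagonalizable as A = V Λ V⁻¹ with Λ diagonal and V invertible, and let 1 ≤ m ≤ n−1. Let r_k ∈ ℂⁿ, let p_k ∈ ℂ[z] with deg p_k ≤ m and p_k(0) = 1 be a polynomial such that r_{k+1} := p_k(A) r_k satisfies ‖r_{k+1}‖ ≤ ‖q(A) r_k‖ for every polynomial q with deg q ≤ m and q(0) = 1 (so r_{k+1} is a GMRES(m) residual of A from r_k with GMRES polynomial p_k), and let r̂_{k+1} be a GMRES(m) residual of Aᴴ from r_k. Then ‖r̂_{k+1}‖ ≤ α (‖r_{k+1}‖ + β_k), where α = ‖V⁻¹‖² (the square of the spectral operator norm of V⁻¹, equivalently 1/σ_min(V)² with σ_min(V) the smallest singular value of V) and β_k = ‖p_k(A)(I − V Vᴴ) r_k‖. -/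
open Polynomial Matrix

open scoped Matrix.Norms.L2Operator

lemma vecEnorm_mulVec_le {n : ℕ} (M : Matrix (Fin n) (Fin n) ℂ) (v : Fin n → ℂ) :
    vecEnorm (M.mulVec v) ≤ ‖M‖ * vecEnorm v :=
  M.l2_opNorm_mulVec ((WithLp.equiv 2 (Fin n → ℂ)).symm v)

lemma vecEnorm_add_le {n : ℕ} (u v : Fin n → ℂ) : vecEnorm (u + v) ≤ vecEnorm u + vecEnorm v := by
  simpa [vecEnorm] using norm_add_le ((WithLp.equiv 2 (Fin n → ℂ)).symm u)
    ((WithLp.equiv 2 (Fin n → ℂ)).symm v)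

lemma aeval_conjTranspose {n : ℕ} (A : Matrix (Fin n) (Fin n) ℂ) (p : ℂ[X]) :
    aeval Aᴴ (p.map (starRingEnd ℂ)) = (aeval A p)ᴴ := by
  induction p using Polynomial.induction_on with
  | C a => simp [Polynomial.algebraMap_eq, Algebra.algebraMap_eq_smul_one]
  | add p q hp hq => simp [Polynomial.map_add, hp, hq]
  | monomial a k hk =>
      rw [Polynomial.map_mul, Polynomial.map_C, Polynomial.map_pow, Polynomial.map_X,
        _root_.map_mul, _root_.map_mul, aeval_C, aeval_C, _root_.map_pow, _root_.map_pow, aeval_X, aeval_X,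
        conjTranspose_mul, conjTranspose_pow]
      rw [Algebra.algebraMap_eq_smul_one, Algebra.algebraMap_eq_smul_one]
      simp [conjTranspose_smul, conjTranspose_one, mul_smul_comm, one_mul, mul_one]

lemma conj_pow_unit {n : ℕ} (V L : Matrix (Fin n) (Fin n) ℂ) (hVV : V * V⁻¹ = 1)
    (hV'V : V⁻¹ * V = 1) (k : ℕ) : (V * L * V⁻¹) ^ k = V * L ^ k * V⁻¹ := by
  induction k with
  | zero => simp [hVV]
  | succ k ih =>
      rw [pow_succ, ih, pow_succ]
      calc V * L ^ k * V⁻¹ * (V * L * V⁻¹)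
          = V * L ^ k * (V⁻¹ * V) * (L * V⁻¹) := by simp only [mul_assoc]
        _ = V * (L ^ k * L) * V⁻¹ := by rw [hV'V]; simp only [mul_one, mul_assoc]

lemma aeval_conj_unit {n : ℕ} (V L : Matrix (Fin n) (Fin n) ℂ) (hVV : V * V⁻¹ = 1)
    (hV'V : V⁻¹ * V = 1) (p : ℂ[X]) :
    aeval (V * L * V⁻¹) p = V * aeval L p * V⁻¹ := by
  induction p using Polynomial.induction_on with
  | C a =>
      simp [Polynomial.algebraMap_eq, Algebra.algebraMap_eq_smul_one, Matrix.mul_smul,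
        Matrix.smul_mul, hVV]
  | add p q hp hq => simp [hp, hq, Matrix.mul_add, Matrix.add_mul]
  | monomial a k hk =>
      rw [_root_.map_mul, _root_.map_mul, aeval_C, aeval_C, _root_.map_pow, _root_.map_pow,
        aeval_X, aeval_X, conj_pow_unit V L hVV hV'V]
      simp [Algebra.algebraMap_eq_smul_one, smul_mul_assoc, mul_smul_comm, one_mul]

lemma aeval_diagonal' {n : ℕ} (d : Fin n → ℂ) (p : ℂ[X]) :
    aeval (Matrix.diagonal d) p = Matrix.diagonal (fun i => p.eval (d i)) := by
  have h1 : aeval (Matrix.diagonal d) p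
      = (Matrix.diagonalAlgHom ℂ : (Fin n → ℂ) →ₐ[ℂ] Matrix (Fin n) (Fin n) ℂ) (aeval d p) :=
    (Polynomial.aeval_algHom_apply (Matrix.diagonalAlgHom ℂ : (Fin n → ℂ) →ₐ[ℂ] Matrix (Fin n) (Fin n) ℂ) d p)
  rw [h1]
  have h2 : aeval d p = fun i => p.eval (d i) := by
    funext i
    have := Polynomial.aeval_algHom_apply (Pi.evalAlgHom ℂ (fun _ : Fin n => ℂ) i) d p
    simpa [Polynomial.coe_aeval_eq_eval] using this.symm
  rw [h2]
  rfl

lemma vecEnorm_diag_star {n : ℕ} (e : Fin n → ℂ) (x : Fin n → ℂ) :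
    vecEnorm ((Matrix.diagonal (star e)).mulVec x) = vecEnorm ((Matrix.diagonal e).mulVec x) := by
  simp only [vecEnorm, EuclideanSpace.norm_eq]
  congr 1
  refine Finset.sum_congr rfl fun i _ => ?_
  simp [Matrix.mulVec_diagonal, norm_mul, Pi.star_apply]

lemma vecEnorm_neg {n : ℕ} (v : Fin n → ℂ) : vecEnorm (-v) = vecEnorm v := by
  simpa [vecEnorm] using norm_neg ((WithLp.equiv 2 (Fin n → ℂ)).symm v)

/-- Near-normality bound, single cycle: for a diagonalizable `A = V Λ V⁻¹`, the GMRES(m)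
residual `r̂_{k+1}` of `Aᴴ` from `r_k` satisfies `‖r̂_{k+1}‖ ≤ α (‖r_{k+1}‖ + β_k)`, where
`α = ‖V⁻¹‖²` (spectral operator norm) and `β_k = ‖p_k(A)(I - V Vᴴ) r_k‖`. -/
theorem gmres_residual_conjTranspose_bound_diagonalizable {n : ℕ} (m : ℕ)
    (hm : 1 ≤ m) (hmn : m ≤ n - 1)
    (A V Lam : Matrix (Fin n) (Fin n) ℂ) (hA : IsUnit A) (hV : IsUnit V)
    (hLam : Lam.IsDiag) (hdecomp : A = V * Lam * V⁻¹)
    (rk rkp1 rhat : Fin n → ℂ) (pk : ℂ[X])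
    (hdeg : pk.natDegree ≤ m) (hpk0 : pk.eval 0 = 1)
    (hrkp1 : rkp1 = (aeval A pk).mulVec rk)
    (hmin : ∀ q : ℂ[X], q.natDegree ≤ m → q.eval 0 = 1 →
      vecEnorm rkp1 ≤ vecEnorm ((aeval A q).mulVec rk))
    (hrhat : IsGMRESResidual m Aᴴ rk rhat) :
    vecEnorm rhat ≤ ‖V⁻¹‖ ^ 2 *
      (vecEnorm rkp1 + vecEnorm ((aeval A pk).mulVec ((1 - V * Vᴴ).mulVec rk))) := by
  obtain ⟨p', -, -, -, hopt⟩ := hrhat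
  have hdet : IsUnit V.det := (Matrix.isUnit_iff_isUnit_det V).mp hV
  have hVV : V * V⁻¹ = 1 := Matrix.mul_nonsing_inv V hdet
  have hV'V : V⁻¹ * V = 1 := Matrix.nonsing_inv_mul V hdet
  have hinv : (0:ℝ) ≤ ‖V⁻¹‖ := norm_nonneg _
  have hqd : (pk.map (starRingEnd ℂ)).natDegree ≤ m := le_trans Polynomial.natDegree_map_le hdeg
  have hq0 : (pk.map (starRingEnd ℂ)).eval 0 = 1 := by
    rw [Polynomial.eval_map, Polynomial.eval₂_at_zero, Polynomial.coeff_zero_eq_eval_zero, hpk0]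
    simp
  have h1 : vecEnorm rhat ≤ vecEnorm ((aeval A pk)ᴴ.mulVec rk) := by
    have h := hopt _ hqd hq0
    rwa [aeval_conjTranspose A pk] at h
  set e : Fin n → ℂ := fun i => pk.eval (Lam i i) with he
  have hD : aeval Lam pk = Matrix.diagonal e := by
    conv_lhs => rw [← hLam.diagonal_diag]
    exact aeval_diagonal' _ pk
  have hP : aeval A pk = V * Matrix.diagonal e * V⁻¹ := by
    rw [hdecomp, aeval_conj_unit V Lam hVV hV'V, hD]
  have hPH : (aeval A pk)ᴴ = (V⁻¹)ᴴ * (Matrix.diagonal (star e) * Vᴴ) := by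
    rw [hP]
    simp [Matrix.conjTranspose_mul, Matrix.diagonal_conjTranspose, Matrix.mul_assoc]
  have step0 : vecEnorm ((aeval A pk)ᴴ.mulVec rk)
      = vecEnorm ((V⁻¹)ᴴ.mulVec ((Matrix.diagonal (star e)).mulVec (Vᴴ.mulVec rk))) := by
    rw [hPH]
    simp only [Matrix.mulVec_mulVec, Matrix.mul_assoc]
  have step1 : vecEnorm ((V⁻¹)ᴴ.mulVec ((Matrix.diagonal (star e)).mulVec (Vᴴ.mulVec rk)))
      ≤ ‖V⁻¹‖ * vecEnorm ((Matrix.diagonal (star e)).mulVec (Vᴴ.mulVec rk)) := by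
    have h := vecEnorm_mulVec_le (V⁻¹)ᴴ ((Matrix.diagonal (star e)).mulVec (Vᴴ.mulVec rk))
    rwa [Matrix.l2_opNorm_conjTranspose] at h
  have step2 : vecEnorm ((Matrix.diagonal (star e)).mulVec (Vᴴ.mulVec rk))
      = vecEnorm ((Matrix.diagonal e).mulVec (Vᴴ.mulVec rk)) := vecEnorm_diag_star e _
  have key2' : V⁻¹ * ((aeval A pk) * (V * Vᴴ)) = Matrix.diagonal e * Vᴴ := by
    rw [hP]
    simp only [← Matrix.mul_assoc]
    rw [hV'V, one_mul, Matrix.mul_assoc (Matrix.diagonal e) V⁻¹ V, hV'V, mul_one]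
  have step3 : (Matrix.diagonal e).mulVec (Vᴴ.mulVec rk)
      = V⁻¹.mulVec ((aeval A pk).mulVec ((V * Vᴴ).mulVec rk)) := by
    simp only [Matrix.mulVec_mulVec, key2']
  have step4 : (aeval A pk).mulVec ((V * Vᴴ).mulVec rk)
      = rkp1 + (-((aeval A pk).mulVec ((1 - V * Vᴴ).mulVec rk))) := by
    rw [hrkp1, ← sub_eq_add_neg, ← Matrix.mulVec_sub, Matrix.sub_mulVec, Matrix.one_mulVec,
      sub_sub_cancel]
  have step5 : vecEnorm ((aeval A pk).mulVec ((V * Vᴴ).mulVec rk))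
      ≤ vecEnorm rkp1 + vecEnorm ((aeval A pk).mulVec ((1 - V * Vᴴ).mulVec rk)) := by
    rw [step4]
    refine (vecEnorm_add_le _ _).trans ?_
    rw [vecEnorm_neg]
  calc vecEnorm rhat ≤ vecEnorm ((aeval A pk)ᴴ.mulVec rk) := h1
    _ = vecEnorm ((V⁻¹)ᴴ.mulVec ((Matrix.diagonal (star e)).mulVec (Vᴴ.mulVec rk))) := step0
    _ ≤ ‖V⁻¹‖ * vecEnorm ((Matrix.diagonal (star e)).mulVec (Vᴴ.mulVec rk)) := step1
    _ = ‖V⁻¹‖ * vecEnorm (V⁻¹.mulVec ((aeval A pk).mulVec ((V * Vᴴ).mulVec rk))) := by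
        rw [step2, step3]
    _ ≤ ‖V⁻¹‖ * (‖V⁻¹‖ * vecEnorm ((aeval A pk).mulVec ((V * Vᴴ).mulVec rk))) :=
        mul_le_mul_of_nonneg_left (vecEnorm_mulVec_le _ _) hinv
    _ ≤ ‖V⁻¹‖ * (‖V⁻¹‖ *
        (vecEnorm rkp1 + vecEnorm ((aeval A pk).mulVec ((1 - V * Vᴴ).mulVec rk)))) :=
        mul_le_mul_of_nonneg_left (mul_le_mul_of_nonneg_left step5 hinv) hinv
    _ = ‖V⁻¹‖ ^ 2 *
        (vecEnorm rkp1 + vecEnorm ((aeval A pk).mulVec ((1 - V * Vᴴ).mulVec rk))) := by ring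
end
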